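/- For any unit vector $|\psi\rangle \in \mathbb{C}^{2^n}$ and any Lagrangian subspace $T \subset \mathbb{F}_2^{2n}$, the stabilizer fidelity satisfies $\mathcal{F}_{\mathcal{S}}(|\psi\rangle) := \max_{|\phi\rangle \in \mathrm{Stab}} |\langle\phi|\psi\rangle|^2 \ge \sum_{x\in T} p_\Psi(x)$, where $p_\Psi(x) = 2^{-n}|\langle\psi|W_x|\psi\rangle|^2$. -/

import Mathlib

set_option maxHeartbeats 1000000
set_option synthInstance.maxHeartbeats 400000


open Matrix Finset Complex

/-- Integer-valued dot product of two `𝔽₂` vectors. -/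
def dotVal {n : ℕ} (a b : Fin n → ZMod 2) : ℕ := ∑ j, (a j * b j).val

/-- The `n`-qubit Weyl (Pauli) operator `W_{(a,b)} = i^{a·b} ⊗_j X^{a_j} Z^{b_j}`. -/
def Weyl (n : ℕ) (a b : Fin n → ZMod 2) :
    Matrix (Fin n → ZMod 2) (Fin n → ZMod 2) ℂ :=
  fun x y => if x = a + y then Complex.I ^ dotVal a b * (-1 : ℂ) ^ dotVal b y else 0

/-- An `n`-qubit stabilizer state: a unit vector stabilized by a stabilizer group, i.e.,
a set of `2^n` commuting signed Weyl operators indexed by a Lagrangian subspace. -/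
def IsStabilizerState (n : ℕ) (φ : (Fin n → ZMod 2) → ℂ) : Prop :=
  (∑ v, ‖φ v‖ ^ 2 = 1) ∧
  ∃ T : Finset ((Fin n → ZMod 2) × (Fin n → ZMod 2)),
    ∃ ε : ((Fin n → ZMod 2) × (Fin n → ZMod 2)) → ℂ,
      T.card = 2 ^ n ∧
      (0 : (Fin n → ZMod 2) × (Fin n → ZMod 2)) ∈ T ∧
      (∀ x ∈ T, ∀ y ∈ T, x + y ∈ T) ∧
      (∀ x ∈ T, ∀ y ∈ T, (dotVal x.1 y.2 + dotVal y.1 x.2) % 2 = 0) ∧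
      (∀ x, ε x = 1 ∨ ε x = -1) ∧
      (∀ x ∈ T, ∀ y ∈ T,
        ε (x + y) • Weyl n (x + y).1 (x + y).2 =
          (ε x * ε y) • (Weyl n x.1 x.2 * Weyl n y.1 y.2)) ∧
      (∀ x ∈ T, Matrix.mulVec (ε x • Weyl n x.1 x.2) φ = φ)


lemma neg_one_pow_congr_mod2 {j k : ℕ} (h : j % 2 = k % 2) : ((-1:ℂ))^j = (-1)^k := by
  rcases Nat.even_or_odd j with hj | hj
  · have hk : Even k := by rw [Nat.even_iff] at hj ⊢; omega
    rw [hj.neg_one_pow, hk.neg_one_pow]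
  · have hk : Odd k := by rw [Nat.odd_iff] at hj ⊢; omega
    rw [hj.neg_one_pow, hk.neg_one_pow]

lemma sum_modEq_two {α : Type*} {s : Finset α} (f g : α → ℕ)
    (h : ∀ j ∈ s, f j ≡ g j [MOD 2]) : (∑ j ∈ s, f j) ≡ ∑ j ∈ s, g j [MOD 2] := by
  unfold Nat.ModEq
  rw [Finset.sum_nat_mod s 2 f, Finset.sum_nat_mod s 2 g]
  exact congrArg (· % 2) (Finset.sum_congr rfl h)

lemma dotVal_comm {n : ℕ} (a b : Fin n → ZMod 2) : dotVal a b = dotVal b a := by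
  unfold dotVal; congr 1; funext j; rw [mul_comm]

lemma dotVal_zero_right {n : ℕ} (a : Fin n → ZMod 2) : dotVal a 0 = 0 := by
  unfold dotVal; simp

lemma dotVal_zero_left {n : ℕ} (a : Fin n → ZMod 2) : dotVal 0 a = 0 := by
  rw [dotVal_comm, dotVal_zero_right]

lemma val_add_modEq (u v : ZMod 2) : (u + v).val ≡ u.val + v.val [MOD 2] := by
  unfold Nat.ModEq
  rw [ZMod.val_add]
  exact (Nat.mod_mod_of_dvd _ dvd_rfl)

lemma dotVal_add_right {n : ℕ} (a b c : Fin n → ZMod 2) :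
    dotVal a (b + c) ≡ dotVal a b + dotVal a c [MOD 2] := by
  unfold dotVal
  rw [← Finset.sum_add_distrib]
  apply sum_modEq_two
  intro j _
  calc (a j * (b + c) j).val = (a j * b j + a j * c j).val := by
        rw [Pi.add_apply, mul_add]
    _ ≡ (a j * b j).val + (a j * c j).val [MOD 2] := val_add_modEq _ _

lemma dotVal_add_left {n : ℕ} (a b c : Fin n → ZMod 2) :
    dotVal (a + b) c ≡ dotVal a c + dotVal b c [MOD 2] := by
  rw [dotVal_comm, dotVal_comm a c, dotVal_comm b c]
  exact dotVal_add_right c a b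

lemma dotVal_expand {n : ℕ} (a b c d : Fin n → ZMod 2) :
    dotVal (a + c) (b + d) ≡ dotVal a b + dotVal a d + dotVal c b + dotVal c d [MOD 2] := by
  calc dotVal (a+c) (b+d) ≡ dotVal a (b+d) + dotVal c (b+d) [MOD 2] := dotVal_add_left _ _ _
    _ ≡ (dotVal a b + dotVal a d) + (dotVal c b + dotVal c d) [MOD 2] :=
        Nat.ModEq.add (dotVal_add_right _ _ _) (dotVal_add_right _ _ _)
    _ = dotVal a b + dotVal a d + dotVal c b + dotVal c d := by ring

noncomputable def wphase {n : ℕ} (a b c d : Fin n → ZMod 2) : ℂ :=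
  Complex.I ^ dotVal a b * Complex.I ^ dotVal c d * (-1:ℂ) ^ dotVal b c *
    (Complex.I ^ dotVal (a + c) (b + d))⁻¹

lemma add_self_zmod2 {n : ℕ} (a : Fin n → ZMod 2) : a + a = 0 := by
  funext j; rw [Pi.add_apply]; revert a; intro a
  have : ∀ c : ZMod 2, c + c = 0 := by decide
  exact this (a j)

lemma Weyl_zero (n : ℕ) : Weyl n 0 0 = 1 := by
  funext x y
  simp [Weyl, dotVal_zero_left, dotVal_zero_right, Matrix.one_apply, eq_comm]


lemma neg_one_pow_key {n : ℕ} (b c d y : Fin n → ZMod 2) :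
    ((-1:ℂ)) ^ dotVal b (c + y) * (-1:ℂ) ^ dotVal d y =
      (-1:ℂ) ^ dotVal b c * (-1:ℂ) ^ dotVal (b + d) y := by
  rw [← pow_add, ← pow_add]
  apply neg_one_pow_congr_mod2
  have h1 : dotVal b (c+y) + dotVal d y ≡ (dotVal b c + dotVal b y) + dotVal d y [MOD 2] :=
    Nat.ModEq.add_right _ (dotVal_add_right b c y)
  have h2 : dotVal b c + dotVal (b+d) y ≡ dotVal b c + (dotVal b y + dotVal d y) [MOD 2] :=
    Nat.ModEq.add_left _ (dotVal_add_left b d y)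
  calc (dotVal b (c+y) + dotVal d y) % 2
      = ((dotVal b c + dotVal b y) + dotVal d y) % 2 := h1
    _ = (dotVal b c + (dotVal b y + dotVal d y)) % 2 := by ring_nf
    _ = (dotVal b c + dotVal (b+d) y) % 2 := h2.symm

lemma Weyl_mul {n : ℕ} (a b c d : Fin n → ZMod 2) :
    Weyl n a b * Weyl n c d = wphase a b c d • Weyl n (a + c) (b + d) := by
  have cancel : ∀ a' : Fin n → ZMod 2, ∀ z, a' + (a' + z) = z := by
    intro a' z; rw [← add_assoc, add_self_zmod2, zero_add]
  funext x y
  rw [Matrix.mul_apply]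
  rw [Finset.sum_eq_single (a + x) (fun z _ hz => by
      have h1 : Weyl n a b x z = 0 := by
        rw [Weyl, if_neg]
        intro h
        exact hz (by rw [h, cancel])
      rw [h1, zero_mul]) (by simp)]
  have h2 : Weyl n a b x (a + x) = Complex.I ^ dotVal a b * (-1:ℂ) ^ dotVal b (a + x) := by
    rw [Weyl, if_pos (by rw [cancel])]
  rw [h2]
  simp only [Weyl, Matrix.smul_apply, smul_eq_mul]
  have hcond : (a + x = c + y) ↔ (x = a + c + y) := by
    constructor
    · intro h; rw [← cancel a x, h, add_assoc]
    · intro h; rw [h, ← add_assoc, ← add_assoc, add_self_zmod2, zero_add]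
  by_cases h : x = a + c + y
  · rw [if_pos (hcond.mpr h), if_pos h, wphase]
    have hI : (Complex.I ^ dotVal (a+c) (b+d)) ≠ 0 := pow_ne_zero _ I_ne_zero
    have hxc : a + x = c + y := hcond.mpr h
    rw [hxc]
    have := neg_one_pow_key b c d y
    field_simp
    linear_combination this
  · rw [if_neg (fun hh => h (hcond.mp hh)), if_neg h, mul_zero, mul_zero]


lemma Weyl_herm {n : ℕ} (a b : Fin n → ZMod 2) : (Weyl n a b)ᴴ = Weyl n a b := by
  have cancel : ∀ a' : Fin n → ZMod 2, ∀ z, a' + (a' + z) = z := by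
    intro a' z; rw [← add_assoc, add_self_zmod2, zero_add]
  funext x y
  rw [Matrix.conjTranspose_apply, Weyl, Weyl]
  have hcond : (y = a + x) ↔ (x = a + y) := by
    constructor
    · intro h; rw [h, cancel]
    · intro h; rw [h, cancel]
  by_cases h : x = a + y
  · rw [if_pos (hcond.mpr h), if_pos h]
    subst h
    simp only [star_mul', star_pow, Complex.star_def, Complex.conj_I, map_neg, RingHom.map_one]
    have h1 : dotVal b (a + y) % 2 = (dotVal b a + dotVal b y) % 2 := dotVal_add_right b a y
    have hc : dotVal a b = dotVal b a := dotVal_comm a b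
    calc (-Complex.I) ^ dotVal a b * (-1:ℂ) ^ dotVal b (a + y)
        = Complex.I ^ dotVal a b * ((-1:ℂ) ^ (dotVal a b + dotVal b (a + y))) := by
          rw [neg_pow, pow_add]; ring
      _ = Complex.I ^ dotVal a b * (-1:ℂ) ^ dotVal b y := by
          rw [neg_one_pow_congr_mod2 (show (dotVal a b + dotVal b (a+y)) % 2 = dotVal b y % 2 by omega)]
  · rw [if_neg (fun hh => h (hcond.mp hh)), if_neg h, star_zero]

lemma I_mul_self (k : ℕ) : Complex.I ^ k * Complex.I ^ k = (-1:ℂ) ^ k := by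
  rw [← pow_add, ← two_mul, pow_mul, Complex.I_sq]

lemma neg_one_pow_inv (k : ℕ) : ((-1:ℂ) ^ k)⁻¹ = (-1:ℂ) ^ k := by
  rw [← inv_pow, show ((-1:ℂ))⁻¹ = -1 by norm_num]

lemma Weyl_sq {n : ℕ} (a b : Fin n → ZMod 2) : Weyl n a b * Weyl n a b = 1 := by
  have hp : wphase a b a b = 1 := by
    rw [wphase, add_self_zmod2, add_self_zmod2, dotVal_zero_left, pow_zero, inv_one, mul_one,
      I_mul_self, dotVal_comm b a, ← pow_add,
      neg_one_pow_congr_mod2 (show (dotVal a b + dotVal a b) % 2 = 0 % 2 by omega), pow_zero]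
  rw [Weyl_mul, add_self_zmod2, add_self_zmod2, Weyl_zero, hp, one_smul]

lemma wphase_sq {n : ℕ} (a b c d : Fin n → ZMod 2)
    (h : (dotVal a d + dotVal c b) % 2 = 0) :
    wphase a b c d = 1 ∨ wphase a b c d = -1 := by
  rw [← mul_self_eq_one_iff, wphase]
  have hexp : dotVal (a+c) (b+d) % 2 =
      (dotVal a b + dotVal a d + dotVal c b + dotVal c d) % 2 := dotVal_expand a b c d
  calc (Complex.I ^ dotVal a b * Complex.I ^ dotVal c d * (-1:ℂ) ^ dotVal b c *
          (Complex.I ^ dotVal (a + c) (b + d))⁻¹) *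
        (Complex.I ^ dotVal a b * Complex.I ^ dotVal c d * (-1:ℂ) ^ dotVal b c *
          (Complex.I ^ dotVal (a + c) (b + d))⁻¹)
      = (Complex.I ^ dotVal a b * Complex.I ^ dotVal a b) *
        ((Complex.I ^ dotVal c d * Complex.I ^ dotVal c d) *
         (((-1:ℂ) ^ dotVal b c * (-1:ℂ) ^ dotVal b c) *
          ((Complex.I ^ dotVal (a+c) (b+d) * Complex.I ^ dotVal (a+c) (b+d))⁻¹))) := by
        rw [mul_inv]; ring
    _ = (-1:ℂ) ^ dotVal a b * ((-1:ℂ) ^ dotVal c d * (((-1:ℂ) ^ dotVal b c * (-1:ℂ) ^ dotVal b c) *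
          ((-1:ℂ) ^ dotVal (a+c) (b+d)))) := by
        rw [I_mul_self, I_mul_self, I_mul_self, neg_one_pow_inv]
    _ = (-1:ℂ) ^ (dotVal a b + (dotVal c d + ((dotVal b c + dotVal b c) +
          dotVal (a+c) (b+d)))) := by
        rw [pow_add, pow_add, pow_add, pow_add]
    _ = 1 := by
        rw [neg_one_pow_congr_mod2 (show (dotVal a b + (dotVal c d + ((dotVal b c + dotVal b c) +
          dotVal (a+c) (b+d)))) % 2 = 0 % 2 by omega), pow_zero]

lemma wphase_symm {n : ℕ} (a b c d : Fin n → ZMod 2)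
    (h : (dotVal a d + dotVal c b) % 2 = 0) :
    wphase a b c d = wphase c d a b := by
  rw [wphase, wphase]
  rw [show c + a = a + c from add_comm c a, show d + b = b + d from add_comm d b]
  have : ((-1:ℂ)) ^ dotVal b c = (-1:ℂ) ^ dotVal d a := by
    apply neg_one_pow_congr_mod2
    rw [dotVal_comm b c, dotVal_comm d a]
    omega
  rw [this]; ring

lemma sum_zmod2 (f : ZMod 2 → ℂ) : ∑ c, f c = f 0 + f 1 := by
  rw [show (univ : Finset (ZMod 2)) = {0, 1} by decide]
  simp

lemma sum_neg_one_pow_dotVal {n : ℕ} (b : Fin n → ZMod 2) :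
    ∑ v : Fin n → ZMod 2, (-1:ℂ) ^ dotVal b v = if b = 0 then (2:ℂ)^n else 0 := by
  have step1 : ∀ v : Fin n → ZMod 2, (-1:ℂ) ^ dotVal b v
      = ∏ j, (-1:ℂ) ^ (b j * v j).val := fun v =>
    (Finset.prod_pow_eq_pow_sum univ _ _).symm
  simp_rw [step1]
  rw [← Fintype.piFinset_univ,
    ← Finset.prod_univ_sum (fun _ => (univ : Finset (ZMod 2)))
      (fun j c => (-1:ℂ) ^ (b j * c).val)]
  have step2 : ∀ j : Fin n, (∑ c : ZMod 2, (-1:ℂ) ^ (b j * c).val)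
      = if b j = 0 then 2 else 0 := by
    intro j
    rw [sum_zmod2]
    have hc : b j = 0 ∨ b j = 1 := by
      have : ∀ c : ZMod 2, c = 0 ∨ c = 1 := by decide
      exact this (b j)
    rcases hc with h | h <;> rw [h] <;> norm_num [ZMod.val_one]
  rw [Finset.prod_congr rfl (fun j _ => step2 j)]
  by_cases hb : b = 0
  · rw [if_pos hb]
    subst hb
    simp
  · rw [if_neg hb]
    obtain ⟨j, hj⟩ : ∃ j, b j ≠ 0 := by
      by_contra hcon
      push_neg at hcon
      exact hb (funext hcon)
    exact Finset.prod_eq_zero (mem_univ j) (if_neg hj)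

lemma dotVal_comm' {n : ℕ} (a b : Fin n → ZMod 2) : dotVal a b = dotVal b a := by
  unfold dotVal; congr 1; funext j; rw [mul_comm]

def Bf {n : ℕ} (w x : (Fin n → ZMod 2) × (Fin n → ZMod 2)) : ℕ :=
  dotVal w.1 x.2 + dotVal w.2 x.1

lemma sum_B {n : ℕ} (x : (Fin n → ZMod 2) × (Fin n → ZMod 2)) :
    ∑ w : (Fin n → ZMod 2) × (Fin n → ZMod 2), (-1:ℂ) ^ Bf w x
      = if x = 0 then ((2:ℂ)^n)^2 else 0 := by
  rw [Fintype.sum_prod_type]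
  simp_rw [Bf, pow_add]
  rw [← Finset.sum_mul_sum]
  have e1 : ∀ v : Fin n → ZMod 2, ((-1:ℂ)) ^ dotVal v x.2 = (-1:ℂ) ^ dotVal x.2 v := by
    intro v; rw [dotVal_comm']
  have e2 : ∀ v : Fin n → ZMod 2, ((-1:ℂ)) ^ dotVal v x.1 = (-1:ℂ) ^ dotVal x.1 v := by
    intro v; rw [dotVal_comm']
  simp_rw [e1, e2]
  rw [sum_neg_one_pow_dotVal x.2, sum_neg_one_pow_dotVal x.1]
  by_cases h : x = 0
  · rw [if_pos h, if_pos (by rw [h]; rfl), if_pos (by rw [h]; rfl), sq]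
  · rw [if_neg h]
    have : ¬(x.2 = 0) ∨ ¬(x.1 = 0) := by
      by_contra hc
      push_neg at hc
      exact h (Prod.ext hc.2 hc.1)
    rcases this with h2 | h1
    · rw [if_neg h2, zero_mul]
    · rw [if_neg h1, mul_zero]

abbrev Pn (n : ℕ) := (Fin n → ZMod 2) × (Fin n → ZMod 2)
abbrev Mn (n : ℕ) := Matrix (Fin n → ZMod 2) (Fin n → ZMod 2) ℂ

noncomputable def Wm {n : ℕ} (x : Pn n) : Mn n := Weyl n x.1 x.2

lemma Wm_sq {n : ℕ} (x : Pn n) : Wm x * Wm x = 1 := Weyl_sq x.1 x.2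

noncomputable def wU {n : ℕ} (x : Pn n) : (Mn n)ˣ := ⟨Wm x, Wm x, Wm_sq x, Wm_sq x⟩

lemma Wm_mul {n : ℕ} (x y : Pn n) :
    Wm x * Wm y = wphase x.1 x.2 y.1 y.2 • Wm (x + y) := Weyl_mul x.1 x.2 y.1 y.2

lemma wU_mul_val {n : ℕ} (x y : Pn n) :
    ((wU x * wU y : (Mn n)ˣ) : Mn n) = wphase x.1 x.2 y.1 y.2 • Wm (x + y) := by
  rw [Units.val_mul]; exact Wm_mul x y

lemma Wm_zero {n : ℕ} : Wm (0 : Pn n) = 1 := Weyl_zero n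

lemma exists_sign (n : ℕ) (T : Finset (Pn n))
    (h0 : (0 : Pn n) ∈ T)
    (hadd : ∀ x ∈ T, ∀ y ∈ T, x + y ∈ T)
    (hiso : ∀ x ∈ T, ∀ y ∈ T, (dotVal x.1 y.2 + dotVal y.1 x.2) % 2 = 0) :
    ∃ ε : Pn n → ℂ,
      (∀ x, ε x = 1 ∨ ε x = -1) ∧ ε 0 = 1 ∧
      (∀ x ∈ T, ∀ y ∈ T, ε x * ε y * wphase x.1 x.2 y.1 y.2 = ε (x + y)) := by
  classical
  let S : Set (Mn n)ˣ := (wU '' ↑T) ∪ {-1}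
  let G : Subgroup (Mn n)ˣ := Subgroup.closure S
  have hmemW : ∀ x ∈ T, wU x ∈ G := fun x hx =>
    Subgroup.subset_closure (Or.inl ⟨x, hx, rfl⟩)
  have hmemN : (-1 : (Mn n)ˣ) ∈ G := Subgroup.subset_closure (Or.inr rfl)
  -- description of elements of G
  have hdesc : ∀ g ∈ G, ∃ s : ℂ, (s = 1 ∨ s = -1) ∧ ∃ x ∈ T, (g : Mn n) = s • Wm x := by
    intro g hg
    induction hg using Subgroup.closure_induction with
    | mem u hu =>
      rcases hu with ⟨x, hx, rfl⟩ | hu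
      · exact ⟨1, Or.inl rfl, x, hx, (one_smul _ _).symm⟩
      · refine ⟨-1, Or.inr rfl, 0, h0, ?_⟩
        rw [Set.mem_singleton_iff.mp hu]
        rw [Units.val_neg, Units.val_one, Wm_zero]
        simp
    | one => exact ⟨1, Or.inl rfl, 0, h0, by rw [Units.val_one, Wm_zero]; simp⟩
    | mul g h hgmem hhmem ihg ihh =>
      obtain ⟨s, hs, x, hx, hgx⟩ := ihg
      obtain ⟨t, ht, y, hy, hhy⟩ := ihh
      have hph := wphase_sq x.1 x.2 y.1 y.2 (hiso x hx y hy)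
      refine ⟨s * t * wphase x.1 x.2 y.1 y.2, ?_, x + y, hadd x hx y hy, ?_⟩
      · rcases hs with h1|h1 <;> rcases ht with h2|h2 <;> rcases hph with h3|h3 <;>
          rw [h1, h2, h3] <;> norm_num
      · rw [Units.val_mul, hgx, hhy, smul_mul_smul_comm, Wm_mul, smul_smul]
    | inv g hgmem ihg =>
      obtain ⟨s, hs, x, hx, hgx⟩ := ihg
      have hsq : g * g = 1 := by
        apply Units.ext
        rw [Units.val_mul, hgx, smul_mul_smul_comm, Wm_sq, Units.val_one]
        rcases hs with h1|h1 <;> rw [h1] <;> norm_num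
      have : g⁻¹ = g := by
        rw [← mul_one g⁻¹, ← hsq, ← mul_assoc, inv_mul_cancel, one_mul]
      rw [this]
      exact ⟨s, hs, x, hx, hgx⟩
  
  -- G is commutative
  have hcomm : ∀ g h : ↥G, g * h = h * g := by
    rintro ⟨g, hg⟩ ⟨h, hh⟩
    obtain ⟨s, hs, x, hx, hgx⟩ := hdesc g hg
    obtain ⟨t, ht, y, hy, hhy⟩ := hdesc h hh
    apply Subtype.ext
    apply Units.ext
    show ((g * h : (Mn n)ˣ) : Mn n) = ((h * g : (Mn n)ˣ) : Mn n)
    rw [Units.val_mul, Units.val_mul, hgx, hhy, smul_mul_smul_comm, smul_mul_smul_comm,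
      Wm_mul, Wm_mul, wphase_symm x.1 x.2 y.1 y.2 (hiso x hx y hy), add_comm y x,
      mul_comm t s]
  letI : CommGroup ↥G := { (inferInstance : Group ↥G) with mul_comm := hcomm }
  have hsq : ∀ g : ↥G, g * g = 1 := by
    rintro ⟨g, hg⟩
    obtain ⟨s, hs, x, hx, hgx⟩ := hdesc g hg
    apply Subtype.ext
    apply Units.ext
    show ((g * g : (Mn n)ˣ) : Mn n) = 1
    rw [Units.val_mul, hgx, smul_mul_smul_comm, Wm_sq]
    rcases hs with h1|h1 <;> rw [h1] <;> norm_num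
  letI : Module (ZMod 2) (Additive ↥G) := AddCommGroup.zmodModule (by
    intro a
    show (2 : ℕ) • a = 0
    rw [two_nsmul]
    apply Additive.toMul.injective
    exact hsq a.toMul)
  let uneg : ↥G := ⟨-1, hmemN⟩
  let m : Additive ↥G := Additive.ofMul uneg
  have hm0 : m ≠ 0 := by
    intro h
    have h2 : uneg = 1 := Additive.ofMul.injective h
    have h3 : ((-1 : (Mn n)ˣ) : Mn n) = ((1 : (Mn n)ˣ) : Mn n) :=
      congrArg (fun g : ↥G => ((g : (Mn n)ˣ) : Mn n)) h2
    rw [Units.val_neg, Units.val_one] at h3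
    have h4 := congrFun (congrFun h3 default) default
    rw [Matrix.neg_apply, Matrix.one_apply_eq] at h4
    norm_num at h4
  let L : Submodule (ZMod 2) (Additive ↥G) := Submodule.span (ZMod 2) {m}
  obtain ⟨K, hK⟩ := Submodule.exists_isCompl L
  let f := L.linearProjOfIsCompl K hK
  let χ : ↥G → ℂ := fun g => if f (Additive.ofMul g) = 0 then 1 else -1
  have hmL : m ∈ L := Submodule.mem_span_singleton_self m
  have hLcases : ∀ v : ↥L, v = 0 ∨ v = ⟨m, hmL⟩ := by
    rintro ⟨v, hv⟩
    obtain ⟨c, hc⟩ := Submodule.mem_span_singleton.mp hv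
    have hzc : ∀ c' : ZMod 2, c' = 0 ∨ c' = 1 := by decide
    have : c = 0 ∨ c = 1 := hzc c
    rcases this with h|h
    · left; apply Subtype.ext; show v = 0; rw [← hc, h, zero_smul]
    · right; apply Subtype.ext; show v = m; rw [← hc, h, one_smul]
  have hmm : m + m = 0 := by
    apply Additive.toMul.injective
    exact hsq uneg
  have hne : (⟨m, hmL⟩ : ↥L) ≠ 0 := fun hc => hm0 (congrArg Subtype.val hc)
  have hmmL : (⟨m, hmL⟩ : ↥L) + ⟨m, hmL⟩ = 0 := Subtype.ext hmm
  have hχmul : ∀ g h : ↥G, χ (g * h) = χ g * χ h := by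
    intro g h
    have hadd' : f (Additive.ofMul (g * h)) = f (Additive.ofMul g) + f (Additive.ofMul h) := by
      rw [show Additive.ofMul (g * h) = Additive.ofMul g + Additive.ofMul h from rfl, map_add]
    show (if f (Additive.ofMul (g*h)) = 0 then (1:ℂ) else -1)
      = (if f (Additive.ofMul g) = 0 then (1:ℂ) else -1) *
        (if f (Additive.ofMul h) = 0 then (1:ℂ) else -1)
    rcases hLcases (f (Additive.ofMul g)) with h1|h1 <;>
      rcases hLcases (f (Additive.ofMul h)) with h2|h2
    · rw [hadd', h1, h2, add_zero]; simp [hne]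
    · rw [hadd', h1, h2, zero_add]; simp [hne]
    · rw [hadd', h1, h2, add_zero]; simp [hne]
    · rw [hadd', h1, h2, hmmL]; simp [hne]
  have hχneg : χ uneg = -1 := by
    show (if f (Additive.ofMul uneg) = 0 then (1:ℂ) else -1) = -1
    have : f (Additive.ofMul uneg) = ⟨m, hmL⟩ := by
      have := Submodule.linearProjOfIsCompl_apply_left (p := L) (q := K) hK ⟨m, hmL⟩
      exact this
    rw [this, if_neg (fun hc => hm0 (congrArg Subtype.val hc))]
  have hχpm : ∀ g : ↥G, χ g = 1 ∨ χ g = -1 := by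
    intro g
    by_cases h : f (Additive.ofMul g) = 0
    · left; show (if f (Additive.ofMul g) = 0 then (1:ℂ) else -1) = 1; rw [if_pos h]
    · right; show (if f (Additive.ofMul g) = 0 then (1:ℂ) else -1) = -1; rw [if_neg h]
  -- define ε
  refine ⟨fun x => if hx : x ∈ T then χ ⟨wU x, hmemW x hx⟩ else 1, ?_, ?_, ?_⟩
  · intro x
    beta_reduce
    by_cases hx : x ∈ T
    · rw [dif_pos hx]; exact hχpm _
    · left; rw [dif_neg hx]
  · -- ε 0 = 1 : prove χ (wU 0) = 1 since wU 0 = 1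
    beta_reduce
    rw [dif_pos h0]
    have hwu0 : (⟨wU 0, hmemW 0 h0⟩ : ↥G) = 1 := by
      apply Subtype.ext; apply Units.ext
      show Wm (0 : Pn n) = 1
      exact Wm_zero
    rw [hwu0]
    show (if f (Additive.ofMul (1 : ↥G)) = 0 then (1:ℂ) else -1) = 1
    rw [show Additive.ofMul (1 : ↥G) = 0 from rfl, map_zero, if_pos rfl]
  · intro x hx y hy
    have hxyT : x + y ∈ T := hadd x hx y hy
    beta_reduce; rw [dif_pos hx, dif_pos hy, dif_pos hxyT]
    have hph := wphase_sq x.1 x.2 y.1 y.2 (hiso x hx y hy)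
    rcases hph with hp | hp
    · have huu : (⟨wU x, hmemW x hx⟩ : ↥G) * ⟨wU y, hmemW y hy⟩ = ⟨wU (x+y), hmemW _ hxyT⟩ := by
        apply Subtype.ext; apply Units.ext
        show ((wU x * wU y : (Mn n)ˣ) : Mn n) = Wm (x + y)
        rw [wU_mul_val, hp, one_smul]
      rw [hp, mul_one, ← hχmul, huu]
    · have huu : (⟨wU x, hmemW x hx⟩ : ↥G) * ⟨wU y, hmemW y hy⟩
          = uneg * ⟨wU (x+y), hmemW _ hxyT⟩ := by
        apply Subtype.ext; apply Units.ext
        show ((wU x * wU y : (Mn n)ˣ) : Mn n) = ((-1 : (Mn n)ˣ) * wU (x+y) : (Mn n)ˣ)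
        rw [wU_mul_val, hp, Units.val_mul, Units.val_neg, Units.val_one]
        show (-1 : ℂ) • Wm (x+y) = -1 * Wm (x+y)
        rw [neg_one_mul, neg_smul, one_smul]
      have := hχmul ⟨wU x, hmemW x hx⟩ ⟨wU y, hmemW y hy⟩
      rw [huu, hχmul uneg _, hχneg] at this
      rw [hp, ← this]
      ring

-- small helpers
lemma addself_P {n : ℕ} (p : Pn n) : p + p = 0 :=
  Prod.ext (add_self_zmod2 p.1) (add_self_zmod2 p.2)

lemma cancel_P {n : ℕ} (p q : Pn n) : p + (p + q) = q := by
  rw [← add_assoc, addself_P, zero_add]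

lemma Bf_add {n : ℕ} (w x y : Pn n) : (-1:ℂ) ^ Bf w (x + y) = (-1:ℂ) ^ Bf w x * (-1:ℂ) ^ Bf w y := by
  rw [← pow_add]
  apply neg_one_pow_congr_mod2
  have h1 := dotVal_add_right w.1 x.2 y.2
  have h2 := dotVal_add_right w.2 x.1 y.1
  unfold Nat.ModEq at h1 h2
  unfold Bf
  rw [Prod.fst_add, Prod.snd_add]
  omega

lemma Bf_sq {n : ℕ} (w x : Pn n) : (-1:ℂ) ^ Bf w x * (-1:ℂ) ^ Bf w x = 1 := by
  rw [← pow_add, neg_one_pow_congr_mod2 (show (Bf w x + Bf w x) % 2 = 0 % 2 by omega), pow_zero]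

lemma Bf_conj {n : ℕ} (w x : Pn n) :
    (starRingEnd ℂ) ((-1:ℂ) ^ Bf w x) = (-1:ℂ) ^ Bf w x := by
  rw [map_pow, map_neg, RingHom.map_one]

lemma dotProduct_sum_right {α : Type*} [Fintype α] {ι : Type*} (s : Finset ι)
    (f : ι → (α → ℂ)) (w : α → ℂ) : w ⬝ᵥ (∑ i ∈ s, f i) = ∑ i ∈ s, w ⬝ᵥ f i := by
  simp only [dotProduct, Finset.sum_apply, Finset.mul_sum]
  exact Finset.sum_comm

lemma mulVec_sum' {α : Type*} [Fintype α] {ι : Type*} (s : Finset ι)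
    (A : Matrix α α ℂ) (f : ι → (α → ℂ)) : A *ᵥ (∑ i ∈ s, f i) = ∑ i ∈ s, A *ᵥ f i := by
  funext j
  simp only [Matrix.mulVec, dotProduct, Finset.sum_apply, Finset.mul_sum]
  exact Finset.sum_comm

lemma dot_self_norm {α : Type*} [Fintype α] (v : α → ℂ) :
    star v ⬝ᵥ v = ((∑ i, ‖v i‖^2 : ℝ) : ℂ) := by
  rw [dotProduct]
  push_cast
  apply Finset.sum_congr rfl
  intro i _
  rw [Pi.star_apply, Complex.star_def, mul_comm, Complex.mul_conj, Complex.normSq_eq_norm_sq]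
  norm_num


lemma sum_shift {n : ℕ} {γ : Type*} [AddCommMonoid γ] {T : Finset (Pn n)}
    (hadd : ∀ x ∈ T, ∀ y ∈ T, x + y ∈ T) {x : Pn n} (hx : x ∈ T) (F : Pn n → γ) :
    ∑ y ∈ T, F (x + y) = ∑ z ∈ T, F z := by
  refine Finset.sum_bij' (fun y _ => x + y) (fun z _ => x + z) ?_ ?_ ?_ ?_ ?_
  · intro a ha; exact hadd x hx a ha
  · intro a ha; exact hadd x hx a ha
  · intro a _; exact cancel_P x a
  · intro a _; exact cancel_P x a
  · intro a _; rfl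

lemma neg_one_pow_pm (k : ℕ) : ((-1:ℂ))^k = 1 ∨ ((-1:ℂ))^k = -1 := by
  rcases Nat.even_or_odd k with h|h
  · left; exact h.neg_one_pow
  · right; exact h.neg_one_pow

lemma dotProduct_sum_left {α : Type*} [Fintype α] {ι : Type*} (s : Finset ι)
    (f : ι → (α → ℂ)) (w : α → ℂ) : (∑ i ∈ s, f i) ⬝ᵥ w = ∑ i ∈ s, f i ⬝ᵥ w := by
  simp only [dotProduct, Finset.sum_apply, Finset.sum_mul]
  exact Finset.sum_comm

lemma trace_weyl_vecMulVec {n : ℕ} (A : Mn n) (ψ : (Fin n → ZMod 2) → ℂ) :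
    (A * Matrix.vecMulVec ψ (star ψ)).trace = star ψ ⬝ᵥ (A *ᵥ ψ) := by
  simp only [Matrix.trace, Matrix.diag, Matrix.mul_apply, Matrix.vecMulVec_apply,
    Matrix.mulVec, dotProduct, Pi.star_apply, Finset.mul_sum]
  apply Finset.sum_congr rfl
  intro v _
  apply Finset.sum_congr rfl
  intro w _
  simp [Complex.star_def]
  ring

/-- For any unit vector `ψ` and Lagrangian subspace `T`, the stabilizer fidelity of `ψ`
is at least `∑_{x ∈ T} p_Ψ(x)` where `p_Ψ(x) = 2^{-n} |⟨ψ|W_x|ψ⟩|²`. -/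
theorem stabilizer_fidelity_lower_bound (n : ℕ) (ψ : (Fin n → ZMod 2) → ℂ)
    (hψ : ∑ x, ‖ψ x‖ ^ 2 = 1)
    (T : Finset ((Fin n → ZMod 2) × (Fin n → ZMod 2)))
    (hcard : T.card = 2 ^ n)
    (h0 : (0 : (Fin n → ZMod 2) × (Fin n → ZMod 2)) ∈ T)
    (hadd : ∀ x ∈ T, ∀ y ∈ T, x + y ∈ T)
    (hiso : ∀ x ∈ T, ∀ y ∈ T, (dotVal x.1 y.2 + dotVal y.1 x.2) % 2 = 0) :
    ∃ φ : (Fin n → ZMod 2) → ℂ, IsStabilizerState n φ ∧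
      ∑ x ∈ T, ((2 : ℝ) ^ n)⁻¹ *
          ‖(Weyl n x.1 x.2 * Matrix.vecMulVec ψ (star ψ)).trace‖ ^ 2
        ≤ ‖∑ v, (starRingEnd ℂ) (φ v) * ψ v‖ ^ 2 := by

  classical
  obtain ⟨ε, hεpm, hε0, hkey⟩ := exists_sign n T h0 hadd hiso
  have hεconj : ∀ x, (starRingEnd ℂ) (ε x) = ε x := by
    intro x; rcases hεpm x with h|h <;> rw [h] <;> simp
  have hεsq : ∀ x, ε x * ε x = 1 := by
    intro x; rcases hεpm x with h|h <;> rw [h] <;> norm_num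
  set η : Pn n → Mn n := fun x => ε x • Wm x with hη
  set u : Pn n → ((Fin n → ZMod 2) → ℂ) := fun x => η x *ᵥ ψ with hu
  set t : Pn n → ℂ := fun x => star ψ ⬝ᵥ u x with ht
  have hηmul : ∀ x ∈ T, ∀ y ∈ T, η x * η y = η (x + y) := by
    intro x hx y hy
    show (ε x • Wm x) * (ε y • Wm y) = ε (x + y) • Wm (x + y)
    rw [smul_mul_smul_comm, Wm_mul, smul_smul, ← hkey x hx y hy]
  have hη0 : η 0 = 1 := by
    show ε 0 • Wm 0 = 1
    rw [hε0, Wm_zero, one_smul]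
  have hηherm : ∀ x, (η x)ᴴ = η x := by
    intro x
    show (ε x • Wm x)ᴴ = ε x • Wm x
    rw [Matrix.conjTranspose_smul]
    have h1 : (Wm x)ᴴ = Wm x := Weyl_herm x.1 x.2
    rw [h1, Complex.star_def, hεconj]
  have huu : ∀ x ∈ T, ∀ y ∈ T, star (u x) ⬝ᵥ u y = t (x + y) := by
    intro x hx y hy
    show star (η x *ᵥ ψ) ⬝ᵥ (η y *ᵥ ψ) = star ψ ⬝ᵥ (η (x+y) *ᵥ ψ)
    rw [Matrix.star_mulVec, ← Matrix.dotProduct_mulVec, hηherm, Matrix.mulVec_mulVec,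
      hηmul x hx y hy]
  have huψ : ∀ x ∈ T, star (u x) ⬝ᵥ ψ = t x := by
    intro x hx
    show star (η x *ᵥ ψ) ⬝ᵥ ψ = star ψ ⬝ᵥ (η x *ᵥ ψ)
    rw [Matrix.star_mulVec, ← Matrix.dotProduct_mulVec, hηherm]
  have htconj : ∀ x ∈ T, (starRingEnd ℂ) (t x) = t x := by
    intro x hx
    have h1 : star (star ψ ⬝ᵥ u x) = star (u x) ⬝ᵥ ψ := by
      rw [Matrix.star_dotProduct, star_star]
    have h2 : (starRingEnd ℂ) (t x) = star (t x) := rfl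
    rw [h2, ht]
    simp only
    rw [h1, huψ x hx, ht]
  have ht0 : t 0 = 1 := by
    show star ψ ⬝ᵥ (η 0 *ᵥ ψ) = 1
    rw [hη0, Matrix.one_mulVec, dot_self_norm, hψ, Complex.ofReal_one]
  have htnorm : ∀ x ∈ T, t x * t x = ((‖t x‖^2 : ℝ) : ℂ) := by
    intro x hx
    have h1 : t x * t x = t x * (starRingEnd ℂ) (t x) := by rw [htconj x hx]
    rw [h1, Complex.mul_conj, Complex.normSq_eq_norm_sq]
  set c : ℝ := ((2:ℝ)^n)⁻¹ with hcdef
  have hc2 : (c:ℂ) * (2:ℂ)^n = 1 := by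
    rw [hcdef]
    push_cast
    rw [inv_mul_cancel₀]
    exact pow_ne_zero _ (by norm_num)
  set β : Pn n → Pn n → ℂ := fun w x => (-1:ℂ) ^ Bf w x with hβ
  set Ψf : Pn n → ((Fin n → ZMod 2) → ℂ) := fun w => (c:ℂ) • ∑ x ∈ T, β w x • u x with hΨ
  set Q : Pn n → ℝ := fun w => ∑ v, ‖Ψf w v‖^2 with hQ
  -- the inner-sum shift identity
  have hinner2 : ∀ w, ∀ x ∈ T, ∑ y ∈ T, β w y * t (x + y) = β w x * ∑ z ∈ T, β w z * t z := by
    intro w x hx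
    have h1 : ∑ y ∈ T, β w y * t (x+y) = ∑ y ∈ T, (fun q => β w (x + q) * t q) (x + y) := by
      apply Finset.sum_congr rfl
      intro y hy
      simp only
      rw [cancel_P]
    rw [h1, sum_shift hadd hx (fun q => β w (x + q) * t q), Finset.mul_sum]
    apply Finset.sum_congr rfl
    intro z _
    simp only [hβ]
    rw [Bf_add]
    ring
  have hQc : ∀ w, (Q w : ℂ) = (c:ℂ) * ∑ x ∈ T, β w x * t x := by
    intro w
    have h1 : (Q w : ℂ) = star (Ψf w) ⬝ᵥ Ψf w := (dot_self_norm _).symm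
    have hstarΨ : star (Ψf w) = (c:ℂ) • ∑ x ∈ T, β w x • star (u x) := by
      rw [hΨ]
      simp only
      rw [star_smul, star_sum]
      congr 1
      · rw [Complex.star_def, Complex.conj_ofReal]
      · apply Finset.sum_congr rfl
        intro x _
        rw [star_smul, Complex.star_def, Bf_conj]
    rw [h1, hstarΨ, hΨ]
    simp only
    rw [smul_dotProduct, dotProduct_smul, dotProduct_sum_left]
    have h2 : ∀ x ∈ T, (β w x • star (u x)) ⬝ᵥ (∑ y ∈ T, β w y • u y)
        = β w x * (β w x * ∑ z ∈ T, β w z * t z) := by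
      intro x hx
      rw [smul_dotProduct, dotProduct_sum_right]
      have h3 : ∀ y ∈ T, star (u x) ⬝ᵥ (β w y • u y) = β w y * t (x + y) := by
        intro y hy
        rw [dotProduct_smul, huu x hx y hy, smul_eq_mul]
      rw [Finset.sum_congr rfl h3, hinner2 w x hx, smul_eq_mul]
    rw [Finset.sum_congr rfl h2]
    have h4 : ∑ x ∈ T, β w x * (β w x * ∑ z ∈ T, β w z * t z)
        = (2:ℂ)^n * ∑ z ∈ T, β w z * t z := by
      have h5 : ∀ x ∈ T, β w x * (β w x * ∑ z ∈ T, β w z * t z) = ∑ z ∈ T, β w z * t z := by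
        intro x _
        rw [← mul_assoc, Bf_sq, one_mul]
      rw [Finset.sum_congr rfl h5, Finset.sum_const, hcard, nsmul_eq_mul]
      push_cast
      ring
    rw [h4, smul_eq_mul, smul_eq_mul, ← mul_assoc, ← mul_assoc]
    rw [show (c:ℂ) * (c:ℂ) * (2:ℂ)^n = (c:ℂ) * ((c:ℂ) * (2:ℂ)^n) by ring, hc2, mul_one]
  have hΨψ : ∀ w, star (Ψf w) ⬝ᵥ ψ = (Q w : ℂ) := by
    intro w
    have hstarΨ : star (Ψf w) = (c:ℂ) • ∑ x ∈ T, β w x • star (u x) := by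
      rw [hΨ]
      simp only
      rw [star_smul, star_sum]
      congr 1
      · rw [Complex.star_def, Complex.conj_ofReal]
      · apply Finset.sum_congr rfl
        intro x _
        rw [star_smul, Complex.star_def, Bf_conj]
    rw [hstarΨ, smul_dotProduct, dotProduct_sum_left]
    have h1 : ∀ x ∈ T, (β w x • star (u x)) ⬝ᵥ ψ = β w x * t x := by
      intro x hx
      rw [smul_dotProduct, huψ x hx, smul_eq_mul]
    rw [Finset.sum_congr rfl h1, smul_eq_mul, ← hQc]
  have hstabΨ : ∀ w, ∀ x ∈ T, η x *ᵥ Ψf w = β w x • Ψf w := by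
    intro w x hx
    rw [hΨ]
    simp only
    rw [Matrix.mulVec_smul, mulVec_sum']
    have h1 : ∀ y ∈ T, η x *ᵥ (β w y • u y) = β w y • u (x + y) := by
      intro y hy
      rw [Matrix.mulVec_smul]
      congr 1
      show η x *ᵥ (η y *ᵥ ψ) = η (x+y) *ᵥ ψ
      rw [Matrix.mulVec_mulVec, hηmul x hx y hy]
    rw [Finset.sum_congr rfl h1]
    have h2 : ∑ y ∈ T, β w y • u (x + y) = ∑ y ∈ T, (fun q => β w (x + q) • u q) (x + y) := by
      apply Finset.sum_congr rfl
      intro y hy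
      simp only
      rw [cancel_P]
    rw [h2, sum_shift hadd hx (fun q => β w (x + q) • u q)]
    have h3 : ∀ z ∈ T, β w (x + z) • u z = β w x • (β w z • u z) := by
      intro z _
      rw [smul_smul]
      congr 1
      simp only [hβ]
      exact Bf_add w x z
    rw [Finset.sum_congr rfl h3, ← Finset.smul_sum, smul_comm]
  -- sum identities
  have hQsumC : ∑ w : Pn n, (Q w : ℂ) = (2:ℂ)^n := by
    have h1 : ∑ w : Pn n, (Q w : ℂ) = (c:ℂ) * ∑ w : Pn n, ∑ x ∈ T, β w x * t x := by
      rw [Finset.mul_sum]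
      apply Finset.sum_congr rfl
      intro w _
      exact hQc w
    rw [h1, Finset.sum_comm]
    have h2 : ∀ x ∈ T, ∑ w : Pn n, β w x * t x = (if x = 0 then ((2:ℂ)^n)^2 else 0) * t x := by
      intro x _
      rw [← Finset.sum_mul]
      congr 1
      exact sum_B x
    rw [Finset.sum_congr rfl h2]
    rw [Finset.sum_eq_single 0 (fun b _ hb => by rw [if_neg hb, zero_mul])
      (fun h => absurd h0 h)]
    rw [if_pos rfl, ht0, mul_one]
    rw [show ((2:ℂ)^n)^2 = (2:ℂ)^n * (2:ℂ)^n by ring, ← mul_assoc, hc2, one_mul]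
  have hQsum : ∑ w : Pn n, Q w = (2:ℝ)^n := by
    apply Complex.ofReal_injective
    push_cast
    rw [← hQsumC]
  have hWsum : ∀ x ∈ T, ∀ y ∈ T, ∑ w : Pn n, β w x * β w y
      = if x = y then ((2:ℂ)^n)^2 else 0 := by
    intro x _ y _
    have h1 : ∀ w : Pn n, β w x * β w y = β w (x + y) := by
      intro w
      simp only [hβ]
      exact (Bf_add w x y).symm
    rw [Finset.sum_congr rfl (fun w _ => h1 w)]
    simp only [hβ]
    rw [sum_B (x + y)]
    congr 1
    simp only [eq_iff_iff]
    constructor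
    · intro h
      have := congrArg (fun q => x + q) h
      rw [cancel_P, add_zero] at this
      exact this.symm
    · intro h
      rw [h, addself_P]
  have hQQC : ∑ w : Pn n, (Q w : ℂ)^2 = ∑ x ∈ T, ((‖t x‖^2 : ℝ) : ℂ) := by
    have h1 : ∀ w : Pn n, (Q w : ℂ)^2
        = (c:ℂ)^2 * ∑ x ∈ T, ∑ y ∈ T, (β w x * β w y) * (t x * t y) := by
      intro w
      rw [hQc w, mul_pow, sq (∑ x ∈ T, β w x * t x)]
      rw [Finset.sum_mul_sum]
      congr 1
      apply Finset.sum_congr rfl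
      intro x _
      apply Finset.sum_congr rfl
      intro y _
      ring
    rw [Finset.sum_congr rfl (fun w _ => h1 w), ← Finset.mul_sum, Finset.sum_comm]
    have h2 : ∑ x ∈ T, ∑ w : Pn n, ∑ y ∈ T, (β w x * β w y) * (t x * t y)
        = ∑ x ∈ T, ((2:ℂ)^n)^2 * (t x * t x) := by
      apply Finset.sum_congr rfl
      intro x hx
      rw [Finset.sum_comm]
      have h3 : ∀ y ∈ T, ∑ w : Pn n, (β w x * β w y) * (t x * t y)
          = (if x = y then ((2:ℂ)^n)^2 else 0) * (t x * t y) := by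
        intro y hy
        rw [← Finset.sum_mul, hWsum x hx y hy]
      rw [Finset.sum_congr rfl h3]
      rw [Finset.sum_eq_single x (fun b _ hb => by rw [if_neg (fun h => hb h.symm), zero_mul])
        (fun h => absurd hx h)]
      rw [if_pos rfl]
    rw [h2]
    have h4 : ∀ x ∈ T, ((2:ℂ)^n)^2 * (t x * t x) = ((2:ℂ)^n)^2 * ((‖t x‖^2 : ℝ) : ℂ) := by
      intro x hx
      rw [htnorm x hx]
    rw [Finset.sum_congr rfl h4, ← Finset.mul_sum, ← mul_assoc]
    rw [show (c:ℂ)^2 * ((2:ℂ)^n)^2 = ((c:ℂ) * (2:ℂ)^n)^2 by ring, hc2, one_pow, one_mul]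
  have hQQ : ∑ w : Pn n, (Q w)^2 = ∑ x ∈ T, ‖t x‖^2 := by
    apply Complex.ofReal_injective
    rw [Complex.ofReal_sum, Complex.ofReal_sum]
    simp only [Complex.ofReal_pow]
    have h := hQQC
    simp only [Complex.ofReal_pow] at h
    exact h
  -- LHS rewrite
  have hLHS : ∑ x ∈ T, ((2 : ℝ) ^ n)⁻¹ *
      ‖(Weyl n x.1 x.2 * Matrix.vecMulVec ψ (star ψ)).trace‖ ^ 2
      = c * ∑ x ∈ T, ‖t x‖^2 := by
    rw [Finset.mul_sum]
    apply Finset.sum_congr rfl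
    intro x hx
    congr 1
    have h1 : (Weyl n x.1 x.2 * Matrix.vecMulVec ψ (star ψ)).trace = star ψ ⬝ᵥ (Wm x *ᵥ ψ) :=
      trace_weyl_vecMulVec _ _
    have h2 : t x = ε x * (star ψ ⬝ᵥ (Wm x *ᵥ ψ)) := by
      rw [ht]
      simp only
      rw [hu]
      simp only
      rw [hη]
      simp only
      rw [Matrix.smul_mulVec, dotProduct_smul, smul_eq_mul]
    rw [h1]
    have h3 : ‖t x‖ = ‖star ψ ⬝ᵥ (Wm x *ᵥ ψ)‖ := by
      rw [h2, norm_mul]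
      rcases hεpm x with h|h <;> rw [h] <;> simp
    rw [h3]
  -- pick the maximizer
  obtain ⟨wst, -, hmax⟩ := Finset.exists_max_image (univ : Finset (Pn n)) Q ⟨0, mem_univ 0⟩
  have hQnonneg : ∀ w, 0 ≤ Q w := by
    intro w
    rw [hQ]
    apply Finset.sum_nonneg
    intro v _
    positivity
  set m : ℝ := Q wst with hm
  have hmpos : 0 < m := by
    by_contra hcon
    push_neg at hcon
    have hz : ∀ w : Pn n, Q w = 0 := fun w =>
      le_antisymm (le_trans (hmax w (mem_univ w)) hcon) (hQnonneg w)
    have : ∑ w : Pn n, Q w = 0 := Finset.sum_eq_zero (fun w _ => hz w)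
    rw [hQsum] at this
    have h2 : (0:ℝ) < (2:ℝ)^n := by positivity
    linarith
  have hbound : c * ∑ x ∈ T, ‖t x‖^2 ≤ m := by
    rw [← hQQ]
    have h1 : ∑ w : Pn n, (Q w)^2 ≤ ∑ w : Pn n, m * Q w := by
      apply Finset.sum_le_sum
      intro w _
      rw [sq]
      exact mul_le_mul_of_nonneg_right (hmax w (mem_univ w)) (hQnonneg w)
    have h2 : ∑ w : Pn n, m * Q w = m * (2:ℝ)^n := by
      rw [← Finset.mul_sum, hQsum]
    have h3 : c * ∑ w : Pn n, (Q w)^2 ≤ c * (m * (2:ℝ)^n) := by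
      apply mul_le_mul_of_nonneg_left _ (by positivity)
      rw [← h2]; exact h1
    calc c * ∑ w : Pn n, (Q w)^2 ≤ c * (m * (2:ℝ)^n) := h3
      _ = m * (c * (2:ℝ)^n) := by ring
      _ = m := by
          rw [hcdef, inv_mul_cancel₀ (by positivity : ((2:ℝ)^n) ≠ 0), mul_one]
  -- the stabilizer state
  set sm : ℝ := Real.sqrt m with hsm
  have hsmpos : 0 < sm := Real.sqrt_pos.mpr hmpos
  have hsmsq : sm * sm = m := Real.mul_self_sqrt hmpos.le
  set φ : (Fin n → ZMod 2) → ℂ := ((sm:ℂ))⁻¹ • Ψf wst with hφ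
  have hsmC : ((sm:ℂ)) ≠ 0 := by
    simp only [ne_eq, Complex.ofReal_eq_zero]
    exact hsmpos.ne'
  refine ⟨φ, ⟨?_, T, fun x => ε x * β wst x, hcard, h0, hadd, hiso, ?_, ?_, ?_⟩, ?_⟩
  · -- norm 1
    rw [hφ]
    have h1 : ∀ v, ‖(((sm:ℂ))⁻¹ • Ψf wst) v‖^2 = (sm⁻¹)^2 * ‖Ψf wst v‖^2 := by
      intro v
      rw [Pi.smul_apply, smul_eq_mul, norm_mul, mul_pow]
      congr 2
      rw [norm_inv, Complex.norm_real, Real.norm_eq_abs, abs_of_pos hsmpos]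
    rw [Finset.sum_congr rfl (fun v _ => h1 v), ← Finset.mul_sum]
    have h2 : ∑ v, ‖Ψf wst v‖^2 = Q wst := rfl
    rw [h2, ← hm]
    field_simp
    rw [← hsmsq]
    ring
  · -- signs are ±1
    intro x
    rcases hεpm x with h1|h1 <;> rcases neg_one_pow_pm (Bf wst x) with h2|h2 <;>
      simp only [hβ] <;> rw [h1, h2] <;> norm_num
  · -- homomorphism
    intro x hx y hy
    show (ε (x+y) * β wst (x+y)) • Wm (x+y)
        = ((ε x * β wst x) * (ε y * β wst y)) • (Wm x * Wm y)
    rw [Wm_mul, smul_smul]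
    congr 1
    simp only [hβ]
    rw [Bf_add, ← hkey x hx y hy]
    ring
  · -- stabilization
    intro x hx
    show (((ε x * β wst x)) • Wm x) *ᵥ φ = φ
    have h1 : ((ε x * β wst x)) • Wm x = β wst x • η x := by
      rw [hη]
      simp only
      rw [smul_smul, mul_comm]
    rw [h1, Matrix.smul_mulVec, hφ, Matrix.mulVec_smul, hstabΨ wst x hx]
    rw [smul_smul, smul_smul]
    congr 1
    have hb : β wst x * β wst x = 1 := Bf_sq wst x
    linear_combination ((sm:ℂ))⁻¹ * hb
  · -- the inequality
    have hRHS : ∑ v, (starRingEnd ℂ) (φ v) * ψ v = star φ ⬝ᵥ ψ := by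
      rw [dotProduct]
      apply Finset.sum_congr rfl
      intro v _
      rw [Pi.star_apply, Complex.star_def]
    rw [hRHS, hφ]
    have h2 : star (((sm:ℂ))⁻¹ • Ψf wst) = ((sm:ℂ))⁻¹ • star (Ψf wst) := by
      rw [star_smul]
      congr 1
      rw [star_inv₀, Complex.star_def, Complex.conj_ofReal]
    rw [h2, smul_dotProduct, hΨψ wst, ← hm, smul_eq_mul]
    have h3 : ((sm:ℂ))⁻¹ * (m:ℂ) = (sm:ℂ) := by
      rw [show (m:ℂ) = (sm:ℂ) * (sm:ℂ) by rw [← Complex.ofReal_mul, hsmsq], ← mul_assoc,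
        inv_mul_cancel₀ hsmC, one_mul]
    rw [h3]
    have h4 : ‖((sm:ℂ))‖^2 = m := by
      rw [Complex.norm_real, Real.norm_eq_abs, abs_of_pos hsmpos, ← hsmsq, sq]
    rw [h4, hLHS]
    exact hbound
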